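/- For every real c < 1/2 there exists a uniform element-based generation algorithm f (a function taking a countable collection X of languages and a finite sequence of strings, and returning a string) such that for every countable collection X, every K ∈ X, and every enumeration E of K: f achieves element-based generation in the limit on E, and μ_up(O(E, f), K) ≥ c. -/

import Mathlib

/-- The finite prefix `[E 0, …, E t]` of the adversary's enumeration. -/
def epref (E : ℕ → ℕ) (t : ℕ) : List ℕ := (List.range (t + 1)).map E

/-- `E` is an enumeration of the language `K`. -/
def IsEnum (E : ℕ → ℕ) (K : Set ℕ) : Prop := Function.Injective E ∧ Set.range E = K

/-- The upper density of `L` in the infinite set `K`: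
`limsup_{N→∞} |L ∩ {k_1,…,k_N}| / N`, where `k_1 < k_2 < ⋯` lists `K` in
increasing order. -/
noncomputable def upperDensity (L K : Set ℕ) : ℝ :=
  Filter.limsup
    (fun N : ℕ => ((Set.ncard {n : ℕ | n < N ∧ Nat.nth (· ∈ K) n ∈ L}) : ℝ) / N)
    Filter.atTop

namespace Stmt10

open scoped Classical

/-- The set of strings seen in the prefix `l`. -/
def lset (l : List ℕ) : Set ℕ := {a | a ∈ l}

/-- "Good" (critical) indices at the moment when `l` has been seen. -/
def GoodS (L : ℕ → Set ℕ) (l : List ℕ) : Set ℕ :=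
  {i | i < l.length ∧ (∀ a ∈ l, a ∈ L i) ∧
    ∀ j, j < i → (∀ a ∈ l, a ∈ L j) → L i ⊆ L j}

lemma goodS_finite (L : ℕ → Set ℕ) (l : List ℕ) : (GoodS L l).Finite :=
  (Set.finite_Iio l.length).subset fun _i hi => hi.1

/-- Number of good indices. -/
noncomputable def mG (L : ℕ → Set ℕ) (l : List ℕ) : ℕ := (GoodS L l).ncard

/-- The occupant of level `k`: the `k`-th smallest good index, if it exists. -/
noncomputable def occ (L : ℕ → Set ℕ) (l : List ℕ) (k : ℕ) : Option ℕ :=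
  if k < mG L l then some (Nat.nth (· ∈ GoodS L l) k) else none

/-- Levels at which a churn (occupant change) happened in the recent window. -/
def jset (L : ℕ → Set ℕ) (D : ℕ) (l : List ℕ) : Set ℕ :=
  {k | ∃ u, 1 ≤ u ∧ (l.length - 1) / D ≤ u ∧ u ≤ l.length - 1 ∧
        occ L (l.take (u + 1)) k ≠ occ L (l.take u) k}

/-- The level played. -/
noncomputable def lam (L : ℕ → Set ℕ) (D : ℕ) (l : List ℕ) : ℕ :=
  if (jset L D l).Nonempty then min (sInf (jset L D l) - 1) (mG L l - 1) else mG L l - 1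

/-- The index of the language played. -/
noncomputable def pIdx (L : ℕ → Set ℕ) (D : ℕ) (l : List ℕ) : ℕ :=
  (occ L l (lam L D l)).getD 0

/-- The generation algorithm. -/
noncomputable def out (L : ℕ → Set ℕ) (D : ℕ) : List ℕ → ℕ := fun l =>
  sInf (L (pIdx L D l) \
    (lset l ∪ ⋃ (s : ℕ) (_ : s ∈ Finset.range (l.length - 1)), {out L D (l.take (s + 1))}))
termination_by l => l.length
decreasing_by
  rename_i hs
  rw [Finset.mem_range] at hs
  rw [List.length_take]
  omega

end Stmt10

namespace Stmt10

@[simp] lemma epref_length (E : ℕ → ℕ) (t : ℕ) : (epref E t).length = t + 1 := by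
  simp [epref]

lemma epref_take (E : ℕ → ℕ) {s t : ℕ} (h : s ≤ t) :
    (epref E t).take (s + 1) = epref E s := by
  have : min (s+1) (t+1) = s + 1 := by omega
  simp [epref, ← List.map_take, List.take_range, this]

lemma lset_epref (E : ℕ → ℕ) (t : ℕ) :
    lset (epref E t) = {a | ∃ s ≤ t, E s = a} := by
  ext a
  simp [lset, epref, Nat.lt_succ_iff]

lemma jset_epref (L : ℕ → Set ℕ) (D : ℕ) (E : ℕ → ℕ) (t : ℕ) :
    jset L D (epref E t) =
      {k | ∃ u, 1 ≤ u ∧ t / D ≤ u ∧ u ≤ t ∧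
        occ L (epref E u) k ≠ occ L (epref E (u - 1)) k} := by
  ext k
  constructor
  · rintro ⟨u, h1, h2, h3, h4⟩
    rw [epref_length] at h2 h3
    simp only [Nat.add_sub_cancel] at h2 h3
    refine ⟨u, h1, h2, h3, ?_⟩
    rw [show u = (u-1)+1 by omega] at h3 h4 ⊢
    rwa [epref_take E h3, epref_take E (by omega)] at h4
  · rintro ⟨u, h1, h2, h3, h4⟩
    refine ⟨u, h1, ?_, ?_, ?_⟩
    · rw [epref_length]; simpa using h2
    · rw [epref_length]; simpa using h3
    · rw [show u = (u-1)+1 by omega] at h3 h4 ⊢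
      rwa [epref_take E h3, epref_take E (by omega)]

lemma out_epref (L : ℕ → Set ℕ) (D : ℕ) (E : ℕ → ℕ) (t : ℕ) :
    out L D (epref E t) = sInf (L (pIdx L D (epref E t)) \
      (lset (epref E t) ∪ {w | ∃ s < t, out L D (epref E s) = w})) := by
  rw [out]
  have h : (⋃ (s : ℕ) (_ : s ∈ Finset.range ((epref E t).length - 1)),
      {out L D ((epref E t).take (s + 1))}) = {w | ∃ s < t, out L D (epref E s) = w} := by
    ext w
    simp only [Set.mem_iUnion, Set.mem_singleton_iff, Finset.mem_range, epref_length,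
      Nat.add_sub_cancel, Set.mem_setOf_eq]
    constructor
    · rintro ⟨s, hs, rfl⟩
      exact ⟨s, hs, by rw [epref_take E (by omega)]⟩
    · rintro ⟨s, hs, hh⟩
      exact ⟨s, hs, by rw [epref_take E (by omega), hh]⟩
  rw [h]

end Stmt10

namespace Stmt10
open scoped Classical

lemma setOf_mem_finite {S : Set ℕ} (hS : S.Finite) : {x | x ∈ S}.Finite := by
  simpa [Set.setOf_mem_eq] using hS

lemma card_setOf_mem {S : Set ℕ} (hS : S.Finite) :
    (setOf_mem_finite hS).toFinset.card = S.ncard := by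
  rw [← Set.ncard_eq_toFinset_card _ (setOf_mem_finite hS)]
  simp [Set.setOf_mem_eq]

lemma nth_mem_ncard {S : Set ℕ} (hS : S.Finite) {k : ℕ} (hk : k < S.ncard) :
    Nat.nth (· ∈ S) k ∈ S := by
  have h := Nat.nth_mem_of_lt_card (setOf_mem_finite hS) (by rwa [card_setOf_mem hS])
  simpa using h

lemma count_nth_ncard {S : Set ℕ} (hS : S.Finite) {k : ℕ} (hk : k < S.ncard) :
    Nat.count (· ∈ S) (Nat.nth (· ∈ S) k) = k :=
  Nat.count_nth_of_lt_card_finite (setOf_mem_finite hS) (by rwa [card_setOf_mem hS])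

lemma nth_le_nth_ncard {S : Set ℕ} (hS : S.Finite) {j k : ℕ} (hjk : j ≤ k)
    (hk : k < S.ncard) : Nat.nth (· ∈ S) j ≤ Nat.nth (· ∈ S) k :=
  Nat.nth_le_nth_of_lt_card (setOf_mem_finite hS) hjk (by rwa [card_setOf_mem hS])

lemma count_congr_lt {P Q : Set ℕ} {x : ℕ} (h : ∀ y, y < x → (y ∈ P ↔ y ∈ Q)) :
    Nat.count (· ∈ P) x = Nat.count (· ∈ Q) x := by
  rw [Nat.count_eq_card_filter_range, Nat.count_eq_card_filter_range]
  congr 1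
  apply Finset.filter_congr
  intro y hy
  rw [Finset.mem_range] at hy
  simp [h y hy]

/-- If `A` is the part of `P` below `a`, then the first `A.ncard` elements of `P`
are those of `A`. -/
lemma nth_agree {P A : Set ℕ} (hP : P.Finite) {a k : ℕ} (hA : P ∩ Set.Iic a = A)
    (hk : k < A.ncard) : Nat.nth (· ∈ P) k = Nat.nth (· ∈ A) k := by
  have hAfin : A.Finite := hA ▸ hP.inter_of_left _
  set x := Nat.nth (· ∈ A) k with hx
  have hxA : x ∈ A := nth_mem_ncard hAfin hk
  have hxPa : x ∈ P ∩ Set.Iic a := hA ▸ hxA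
  have hcA : Nat.count (· ∈ A) x = k := count_nth_ncard hAfin hk
  have hcP : Nat.count (· ∈ P) x = k := by
    rw [← hcA]
    apply count_congr_lt
    intro y hy
    have hya : y ≤ a := le_trans (le_of_lt hy) hxPa.2
    constructor
    · intro hyP
      have : y ∈ P ∩ Set.Iic a := ⟨hyP, hya⟩
      rw [hA] at this
      exact this
    · intro hyA
      have : y ∈ P ∩ Set.Iic a := hA ▸ hyA
      exact this.1
  have := Nat.nth_count (p := (· ∈ P)) hxPa.1
  rw [hcP] at this
  exact this

lemma occ_eq_some {L : ℕ → Set ℕ} {l : List ℕ} {k i : ℕ} :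
    occ L l k = some i ↔ k < mG L l ∧ Nat.nth (· ∈ GoodS L l) k = i := by
  unfold occ
  split <;> simp_all

end Stmt10

namespace Stmt10
open scoped Classical

lemma mem_epref {E : ℕ → ℕ} {t a : ℕ} : a ∈ epref E t ↔ ∃ s, s ≤ t ∧ E s = a := by
  simp [epref, Nat.lt_succ_iff]

theorem core (L : ℕ → Set ℕ) (D : ℕ) (E : ℕ → ℕ) (z : ℕ)
    (hinf : ∀ i, (L i).Infinite) (hD : 1 ≤ D) (hE : Set.range E = L z) :
    (∃ tstar : ℕ, ∀ t, tstar ≤ t →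
        out L D (epref E t) ∈ L z ∧ out L D (epref E t) ∉ lset (epref E t)) ∧
    (∀ T : ℕ, ∃ t, T ≤ t ∧ ∀ s, t / D ≤ s → s ≤ t →
        L (pIdx L D (epref E s)) = L z) := by
  classical
  -- the stable first part of the good chain
  set A : Set ℕ := {i | i ≤ z ∧ L z ⊆ L i ∧ ∀ j, j < i → L z ⊆ L j → L i ⊆ L j} with hA
  have hAfin : A.Finite := (Set.finite_Iic z).subset fun i hi => hi.1
  have hzA : z ∈ A := ⟨le_rfl, subset_rfl, fun j _ h => h⟩
  set r₀ : ℕ := A.ncard - 1 with hr₀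
  have hr : r₀ + 1 = A.ncard := by
    have : 0 < A.ncard := (Set.ncard_pos hAfin).mpr ⟨z, hzA⟩
    omega
  have hConsOfK : ∀ t j, L z ⊆ L j → ∀ a ∈ epref E t, a ∈ L j := by
    intro t j hj a ha
    rw [mem_epref] at ha
    obtain ⟨s, _, rfl⟩ := ha
    exact hj (hE ▸ Set.mem_range_self s)
  have hwit : ∀ j, ¬ L z ⊆ L j → ∃ n, E n ∉ L j := by
    intro j hj
    obtain ⟨k, hkK, hkj⟩ := Set.not_subset.mp hj
    rw [← hE] at hkK
    obtain ⟨n, rfl⟩ := hkK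
    exact ⟨n, hkj⟩
  set g : ℕ → ℕ := fun j => if h : ∃ n, E n ∉ L j then Nat.find h else 0 with hg
  set T₀ : ℕ := (Finset.Iic z).sup g with hT₀def
  have hT₀ : ∀ t, T₀ ≤ t → ∀ j, j ≤ z → (∀ a ∈ epref E t, a ∈ L j) → L z ⊆ L j := by
    intro t ht j hj hcons
    by_contra hns
    have h := hwit j hns
    have hgle : Nat.find h ≤ T₀ := by
      have : g j = Nat.find h := by rw [hg]; simp only [dif_pos h]
      rw [← this]
      exact Finset.le_sup (Finset.mem_Iic.mpr hj)
    have hmem : E (Nat.find h) ∈ epref E t :=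
      mem_epref.mpr ⟨Nat.find h, le_trans hgle ht, rfl⟩
    exact Nat.find_spec h (hcons _ hmem)
  set T₁ : ℕ := max T₀ z with hT₁def
  have hGA : ∀ t, T₁ ≤ t → GoodS L (epref E t) ∩ Set.Iic z = A := by
    intro t ht
    have ht₀ : T₀ ≤ t := le_trans (le_max_left _ _) ht
    have htz : z ≤ t := le_trans (le_max_right _ _) ht
    ext i
    simp only [Set.mem_inter_iff, Set.mem_Iic, GoodS, Set.mem_setOf_eq, epref_length, hA]
    constructor
    · rintro ⟨⟨hilen, hcons, hmin⟩, hiz⟩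
      exact ⟨hiz, hT₀ t ht₀ i hiz hcons, fun j hj hKj => hmin j hj (hConsOfK t j hKj)⟩
    · rintro ⟨hiz, hKi, hmin⟩
      refine ⟨⟨by omega, hConsOfK t i hKi, ?_⟩, hiz⟩
      intro j hj hconsj
      exact hmin j hj (hT₀ t ht₀ j (le_trans (le_of_lt hj) hiz) hconsj)
  have hAsub : ∀ t, T₁ ≤ t → A ⊆ GoodS L (epref E t) := by
    intro t ht i hi
    have : i ∈ GoodS L (epref E t) ∩ Set.Iic z := (hGA t ht).symm ▸ hi
    exact this.1
  have hsubK : ∀ t, T₁ ≤ t → ∀ i ∈ GoodS L (epref E t), z ≤ i → L i ⊆ L z := by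
    intro t ht i hiG hzi
    rcases eq_or_lt_of_le hzi with h | h
    · rw [← h]
    · exact hiG.2.2 z h (hConsOfK t z subset_rfl)
  have hcard : ∀ t, T₁ ≤ t → r₀ + 1 ≤ mG L (epref E t) := by
    intro t ht
    rw [hr]
    exact Set.ncard_le_ncard (hAsub t ht) (goodS_finite L _)
  have hnthA : Nat.nth (· ∈ A) r₀ = z := by
    have hcz : Nat.count (· ∈ A) z = r₀ := by
      have h1 : Nat.count (· ∈ A) z = ((Finset.range z).filter (· ∈ A)).card :=
        Nat.count_eq_card_filter_range _ _
      have h2 : (((Finset.range z).filter (· ∈ A)) : Set ℕ) = A \ {z} := by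
        ext a
        simp only [Finset.coe_filter, Finset.mem_range, Set.mem_setOf_eq, Set.mem_diff,
          Set.mem_singleton_iff]
        constructor
        · rintro ⟨h, ha⟩; exact ⟨ha, by omega⟩
        · rintro ⟨ha, hne⟩
          have := ha.1
          exact ⟨lt_of_le_of_ne this hne, ha⟩
      have h3 : (A \ {z}).ncard + 1 = A.ncard := Set.ncard_diff_singleton_add_one hzA hAfin
      rw [h1, ← Set.ncard_coe_finset, h2]
      omega
    have := Nat.nth_count (p := (· ∈ A)) hzA
    rw [hcz] at this
    exact this
  have hoccA : ∀ t, T₁ ≤ t → ∀ k, k ≤ r₀ →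
      occ L (epref E t) k = some (Nat.nth (· ∈ A) k) := by
    intro t ht k hk
    have hklt : k < mG L (epref E t) := by have := hcard t ht; omega
    have : Nat.nth (· ∈ GoodS L (epref E t)) k = Nat.nth (· ∈ A) k :=
      nth_agree (goodS_finite L _) (hGA t ht) (by omega)
    rw [occ, if_pos hklt, this]
  have hocc_ge : ∀ t, T₁ ≤ t → ∀ k, r₀ ≤ k → k < mG L (epref E t) →
      z ≤ Nat.nth (· ∈ GoodS L (epref E t)) k := by
    intro t ht k hk hklt
    have h1 : Nat.nth (· ∈ GoodS L (epref E t)) r₀ = z := by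
      have := nth_agree (goodS_finite L _) (hGA t ht) (k := r₀) (by omega)
      rw [this, hnthA]
    rw [← h1]
    exact nth_le_nth_ncard (goodS_finite L _) hk hklt
  set T₂ : ℕ := D * (T₁ + 1) with hT₂def
  have hT₂T₁ : T₁ + 1 ≤ T₂ := by
    calc T₁ + 1 = 1 * (T₁ + 1) := by ring
    _ ≤ D * (T₁ + 1) := Nat.mul_le_mul_right _ hD
  have hdiv : ∀ t, T₂ ≤ t → T₁ + 1 ≤ t / D := by
    intro t ht
    rw [Nat.le_div_iff_mul_le (by omega : 0 < D)]
    calc (T₁ + 1) * D = D * (T₁ + 1) := by ring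
    _ ≤ t := ht
  have hjlb : ∀ t, T₂ ≤ t → ∀ k ∈ jset L D (epref E t), r₀ + 1 ≤ k := by
    intro t ht k hk
    rw [jset_epref] at hk
    obtain ⟨u, hu1, hud, hut, hne⟩ := hk
    by_contra hle
    have hk' : k ≤ r₀ := by omega
    have hu : T₁ + 1 ≤ u := le_trans (hdiv t ht) hud
    have e1 := hoccA u (by omega) k hk'
    have e2 := hoccA (u - 1) (by omega) k hk'
    rw [e1, e2] at hne
    exact hne rfl
  have hlam : ∀ t, T₂ ≤ t → r₀ ≤ lam L D (epref E t) ∧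
      lam L D (epref E t) < mG L (epref E t) := by
    intro t ht
    have hm : r₀ + 1 ≤ mG L (epref E t) := hcard t (by omega)
    rw [lam]
    split
    · next h =>
      have hs := Nat.sInf_mem h
      have := hjlb t ht _ hs
      constructor
      · exact le_min (by omega) (by omega)
      · calc min (sInf (jset L D (epref E t)) - 1) (mG L (epref E t) - 1)
            ≤ mG L (epref E t) - 1 := min_le_right _ _
        _ < mG L (epref E t) := by omega
    · exact ⟨by omega, by omega⟩
  have hpidx : ∀ t, T₂ ≤ t →
      pIdx L D (epref E t) = Nat.nth (· ∈ GoodS L (epref E t)) (lam L D (epref E t)) := by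
    intro t ht
    rw [pIdx, occ, if_pos (hlam t ht).2]
    rfl
  have hplayi : ∀ t, T₂ ≤ t → pIdx L D (epref E t) ∈ GoodS L (epref E t) ∧
      z ≤ pIdx L D (epref E t) ∧ L (pIdx L D (epref E t)) ⊆ L z := by
    intro t ht
    have h1 := hpidx t ht
    have h2 : pIdx L D (epref E t) ∈ GoodS L (epref E t) := by
      rw [h1]
      exact nth_mem_ncard (goodS_finite L _) (hlam t ht).2
    have h3 : z ≤ pIdx L D (epref E t) := by
      rw [h1]
      exact hocc_ge t (by omega) _ (hlam t ht).1 (hlam t ht).2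
    exact ⟨h2, h3, hsubK t (by omega) _ h2 h3⟩
  have hprevfin : ∀ t : ℕ, {w | ∃ s < t, out L D (epref E s) = w}.Finite := by
    intro t
    have : {w | ∃ s < t, out L D (epref E s) = w} =
        (fun s => out L D (epref E s)) '' Set.Iio t := by
      ext w
      simp [Set.mem_image]
    rw [this]
    exact (Set.finite_Iio t).image _
  have hvalid : ∀ t, T₂ ≤ t →
      out L D (epref E t) ∈ L (pIdx L D (epref E t)) ∧
      out L D (epref E t) ∉ lset (epref E t) ∧
      out L D (epref E t) ∉ {w | ∃ s < t, out L D (epref E s) = w} := by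
    intro t _
    have hne : (L (pIdx L D (epref E t)) \
        (lset (epref E t) ∪ {w | ∃ s < t, out L D (epref E s) = w})).Nonempty :=
      ((hinf _).diff (((epref E t).finite_toSet).union (hprevfin t))).nonempty
    have := Nat.sInf_mem hne
    rw [← out_epref] at this
    exact ⟨this.1, fun h => this.2 (Or.inl h), fun h => this.2 (Or.inr h)⟩
  -- junk at r₀ is impossible
  have hjr : ∀ t, T₂ ≤ t → lam L D (epref E t) = r₀ → L (pIdx L D (epref E t)) = L z := by
    intro t ht hl
    have h1 := hpidx t ht
    rw [hl] at h1
    have h2 : Nat.nth (· ∈ GoodS L (epref E t)) r₀ = z := by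
      have := nth_agree (goodS_finite L _) (hGA t (by omega)) (k := r₀) (by omega)
      rw [this, hnthA]
    rw [h1, h2]
  -- a junk play implies a later churn at the played level
  have hchurn : ∀ t, T₂ ≤ t → L (pIdx L D (epref E t)) ≠ L z →
      ∃ u, t < u ∧ occ L (epref E u) (lam L D (epref E t)) ≠
        occ L (epref E (u - 1)) (lam L D (epref E t)) := by
    intro t ht hj
    by_contra hno
    push_neg at hno
    set ℓ := lam L D (epref E t) with hℓ
    set i := pIdx L D (epref E t) with hi
    have hocct : occ L (epref E t) ℓ = some i := by
      show occ L (epref E t) (lam L D (epref E t)) = some (pIdx L D (epref E t))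
      rw [occ, if_pos (hlam t ht).2, hpidx t ht]
    have hconst : ∀ n, occ L (epref E (t + n)) ℓ = some i := by
      intro n
      induction n with
      | zero => simpa using hocct
      | succ n ih =>
        have h := hno (t + n + 1) (by omega)
        have h2 : t + n + 1 - 1 = t + n := by omega
        rw [h2] at h
        rw [show t + (n+1) = t + n + 1 by omega, h, ih]
    have hmemG : ∀ u, t ≤ u → i ∈ GoodS L (epref E u) := by
      intro u hu
      have := hconst (u - t)
      rw [show t + (u - t) = u by omega] at this
      rw [occ_eq_some] at this
      rw [← this.2]
      exact nth_mem_ncard (goodS_finite L _) this.1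
    have hKi : L z ⊆ L i := by
      intro k hk
      rw [← hE] at hk
      obtain ⟨n, rfl⟩ := hk
      have := (hmemG (max t n) (le_max_left _ _)).2.1
      exact this _ (mem_epref.mpr ⟨n, le_max_right _ _, rfl⟩)
    exact hj (Set.Subset.antisymm (hplayi t ht).2.2 hKi)
  constructor
  · refine ⟨T₂, fun t ht => ?_⟩
    obtain ⟨h1, h2, _⟩ := hvalid t ht
    exact ⟨(hplayi t ht).2.2 h1, h2⟩
  · -- junk-free windows at all scales
    intro T
    by_contra hcon
    push_neg at hcon
    set T₄ := max T T₂ with hT₄def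
    have key : ∀ v s, T₄ ≤ s → L (pIdx L D (epref E s)) ≠ L z →
        lam L D (epref E s) ≤ v → False := by
      intro v
      induction v with
      | zero =>
        intro s hs hj hl
        have h1 := hlam s (le_trans (le_max_right _ _) hs)
        have h2 : lam L D (epref E s) = r₀ := by omega
        exact hj (hjr s (le_trans (le_max_right _ _) hs) h2)
      | succ v ih =>
        intro s hs hj hl
        rcases Nat.lt_or_ge (lam L D (epref E s)) (v + 1) with h | h
        · exact ih s hs hj (by omega)
        · have hlv : lam L D (epref E s) = v + 1 := by omega
          have hsT₂ : T₂ ≤ s := le_trans (le_max_right _ _) hs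
          obtain ⟨u, hu, hne⟩ := hchurn s hsT₂ hj
          obtain ⟨s', hs'1, hs'2, hj'⟩ := hcon (D * u)
            (le_trans (le_max_left _ _) (le_trans hs (le_trans (le_of_lt hu) (Nat.le_mul_of_pos_left u (by omega)))))
          have hDu : D * u / D = u := Nat.mul_div_cancel_left u (by omega)
          rw [hDu] at hs'1
          -- the level lam s is in the churn window of s'
          have hmem : lam L D (epref E s) ∈ jset L D (epref E s') := by
            rw [jset_epref]
            refine ⟨u, by omega, ?_, by omega, hne⟩
            calc s' / D ≤ D * u / D := Nat.div_le_div_right hs'2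
            _ = u := hDu
          have hlam' : lam L D (epref E s') ≤ v := by
            have hnonempty : (jset L D (epref E s')).Nonempty := ⟨_, hmem⟩
            have hinf_le : sInf (jset L D (epref E s')) ≤ lam L D (epref E s) :=
              Nat.sInf_le hmem
            rw [lam, if_pos hnonempty]
            calc min (sInf (jset L D (epref E s')) - 1) (mG L (epref E s') - 1)
                ≤ sInf (jset L D (epref E s')) - 1 := min_le_left _ _
            _ ≤ v := by omega
          exact ih s' (by omega) hj' hlam'
    obtain ⟨s, hs1, hs2, hj⟩ := hcon (D * T₄)
      (le_trans (le_max_left _ _) (Nat.le_mul_of_pos_left T₄ (by omega)))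
    have hDT : D * T₄ / D = T₄ := Nat.mul_div_cancel_left T₄ (by omega)
    rw [hDT] at hs1
    exact key (lam L D (epref E s)) s hs1 hj le_rfl

end Stmt10

namespace Stmt10
open scoped Classical
open Filter

lemma count_eq_ncard (K : Set ℕ) (x : ℕ) :
    Nat.count (· ∈ K) x = (K ∩ Set.Iio x).ncard := by
  rw [Nat.count_eq_card_filter_range, ← Set.ncard_coe_finset]
  congr 1
  ext a
  simp only [Finset.coe_filter, Finset.mem_range, Set.mem_setOf_eq, Set.mem_inter_iff,
    Set.mem_Iio]
  tauto

end Stmt10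


open Filter

/-- For every `c < 1/2` there is a uniform element-based generation algorithm
(whose output at step `t` is the string `f L (epref E t)`) achieving element-based
generation in the limit on every instance, whose output set
`O(E,f) = {o_t : t} ∩ K` has upper density at least `c` in `K`. -/
theorem stmt10 (c : ℝ) (hc : c < 1 / 2) :
    ∃ f : (ℕ → Set ℕ) → List ℕ → ℕ,
      ∀ (L : ℕ → Set ℕ), (∀ i, (L i).Infinite) →
        ∀ (z : ℕ) (E : ℕ → ℕ), IsEnum E (L z) →
          (∃ tstar : ℕ, ∀ t ≥ tstar,
              f L (epref E t) ∈ L z ∧ ∀ s ≤ t, E s ≠ f L (epref E t)) ∧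
          c ≤ upperDensity ({w : ℕ | ∃ t : ℕ, f L (epref E t) = w} ∩ L z) (L z) := by
  classical
  open Stmt10 in
  obtain ⟨D₀, hD₀⟩ := exists_nat_gt ((1 - c) / (1 - 2 * c))
  set D := max D₀ 2 with hDdef
  have hD2 : 2 ≤ D := le_max_right _ _
  have hD1 : 1 ≤ D := by omega
  have hDR : (2:ℝ) ≤ (D:ℝ) := by exact_mod_cast hD2
  have hDpos : (0:ℝ) < (D:ℝ) := by linarith
  have h2c : (0:ℝ) < 1 - 2 * c := by linarith
  have h1c : (0:ℝ) < 1 - c := by linarith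
  have halpha : c < (1 - c) * (1 - 1 / (D:ℝ)) := by
    have hmax : ((D₀:ℝ)) ≤ (D:ℝ) := by exact_mod_cast le_max_left D₀ 2
    have hDgt : (1 - c) / (1 - 2 * c) < (D:ℝ) := lt_of_lt_of_le hD₀ hmax
    rw [div_lt_iff₀ h2c] at hDgt
    have h3 : (1 - c) / (D:ℝ) < 1 - 2 * c := by
      rw [div_lt_iff₀ hDpos]
      nlinarith
    have h4 : (1 - c) * (1 - 1 / (D:ℝ)) = (1 - c) - (1 - c) / (D:ℝ) := by
      field_simp
    rw [h4]
    linarith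
  obtain ⟨α, hα⟩ : ∃ α : ℝ, α = (1 - c) * (1 - 1 / (D:ℝ)) - c := ⟨_, rfl⟩
  have hαpos : 0 < α := by rw [hα]; linarith
  refine ⟨fun L l => Stmt10.out L D l, ?_⟩
  intro L hinf z E hE
  obtain ⟨hEinj, hErange⟩ := hE
  obtain ⟨⟨T₂, hvalid⟩, hwin⟩ := Stmt10.core L D E z hinf hD1 hErange
  constructor
  · refine ⟨T₂, fun t ht => ?_⟩
    obtain ⟨h1, h2⟩ := hvalid t ht
    refine ⟨h1, fun s hs hEs => h2 ?_⟩
    rw [Stmt10.lset_epref]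
    exact ⟨s, hs, hEs⟩
  · -- density part
    show c ≤ upperDensity ({w : ℕ | ∃ t : ℕ, Stmt10.out L D (epref E t) = w} ∩ L z) (L z)
    set K : Set ℕ := L z with hK
    set O : Set ℕ := {w : ℕ | ∃ t : ℕ, Stmt10.out L D (epref E t) = w} with hO
    set dens : ℕ → ℝ :=
      fun N => ((Set.ncard {n : ℕ | n < N ∧ Nat.nth (· ∈ K) n ∈ O ∩ K}) : ℝ) / N with hdens
    have hnumfin : ∀ N : ℕ, {n : ℕ | n < N ∧ Nat.nth (· ∈ K) n ∈ O ∩ K}.Finite :=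
      fun N => (Set.finite_Iio N).subset fun n hn => hn.1
    have hnumle : ∀ N : ℕ, Set.ncard {n : ℕ | n < N ∧ Nat.nth (· ∈ K) n ∈ O ∩ K} ≤ N := by
      intro N
      calc Set.ncard {n : ℕ | n < N ∧ Nat.nth (· ∈ K) n ∈ O ∩ K}
          ≤ (Set.Iio N).ncard := Set.ncard_le_ncard (fun n hn => hn.1) (Set.finite_Iio N)
      _ = N := by rw [← Finset.coe_Iio, Set.ncard_coe_finset, Nat.card_Iio]
    have hbdd : IsBoundedUnder (· ≤ ·) atTop dens := by
      apply Filter.isBoundedUnder_of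
      refine ⟨1, fun N => ?_⟩
      simp only [hdens]
      rcases Nat.eq_zero_or_pos N with h | h
      · simp [h]
      · rw [div_le_one (by exact_mod_cast h)]
        exact_mod_cast hnumle N
    have hfreq : ∃ᶠ N in atTop, c ≤ dens N := by
      rw [Filter.frequently_atTop]
      intro M
      rcases le_or_gt c 0 with hc0 | hc0
      · refine ⟨M, le_rfl, le_trans hc0 ?_⟩
        simp only [hdens]
        positivity
      -- main case
      obtain ⟨Tc, hTc⟩ := exists_nat_ge (c / α)
      have hTcα : c ≤ α * Tc := by
        rw [div_le_iff₀ hαpos] at hTc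
        linarith
      set T : ℕ := max (2 * M + 2) Tc with hT
      obtain ⟨t, htT, hwt⟩ := hwin T
      have htM : 2 * M + 2 ≤ t := le_trans (le_max_left _ _) htT
      have htTc : Tc ≤ t := le_trans (le_max_right _ _) htT
      -- outputs in the window
      have houts : ∀ s, t / D ≤ s → s ≤ t →
          Stmt10.out L D (epref E s) = sInf (K \ (Stmt10.lset (epref E s) ∪
            {w | ∃ s' < s, Stmt10.out L D (epref E s') = w})) := by
        intro s h1 h2
        rw [Stmt10.out_epref, hwt s h1 h2]
      have hprevfin : ∀ s : ℕ, {w | ∃ s' < s, Stmt10.out L D (epref E s') = w}.Finite := by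
        intro s
        have he : {w | ∃ s' < s, Stmt10.out L D (epref E s') = w} =
            (fun s' => Stmt10.out L D (epref E s')) '' Set.Iio s := by
          ext w
          simp [Set.mem_image]
        rw [he]
        exact (Set.finite_Iio s).image _
      have hDne : ∀ s : ℕ, (K \ (Stmt10.lset (epref E s) ∪
          {w | ∃ s' < s, Stmt10.out L D (epref E s') = w})).Nonempty :=
        fun s => ((hinf z).diff (((epref E s).finite_toSet).union (hprevfin s))).nonempty
      have hofact : ∀ s, t / D ≤ s → s ≤ t →
          Stmt10.out L D (epref E s) ∈ K \ (Stmt10.lset (epref E s) ∪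
            {w | ∃ s' < s, Stmt10.out L D (epref E s') = w}) := by
        intro s h1 h2
        rw [houts s h1 h2]
        exact Nat.sInf_mem (hDne s)
      set x : ℕ := Stmt10.out L D (epref E t) with hx
      have hxmem : x ∈ K \ (Stmt10.lset (epref E t) ∪
          {w | ∃ s' < t, Stmt10.out L D (epref E s') = w}) :=
        hofact t (Nat.div_le_self t D) le_rfl
      have hcov : ∀ k, k ∈ K → k < x → k ∈ Stmt10.lset (epref E t) ∪
          {w | ∃ s' < t, Stmt10.out L D (epref E s') = w} := by
        intro k hk hkx
        by_contra hkn
        have : k ∈ K \ (Stmt10.lset (epref E t) ∪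
            {w | ∃ s' < t, Stmt10.out L D (epref E s') = w}) := ⟨hk, hkn⟩
        have hle := Nat.sInf_le this
        rw [← houts t (Nat.div_le_self t D) le_rfl] at hle
        omega
      have hlt : ∀ s, t / D ≤ s → s < t → Stmt10.out L D (epref E s) < x := by
        intro s h1 h2
        have hmono : K \ (Stmt10.lset (epref E t) ∪
            {w | ∃ s' < t, Stmt10.out L D (epref E s') = w}) ⊆
            K \ (Stmt10.lset (epref E s) ∪
            {w | ∃ s' < s, Stmt10.out L D (epref E s') = w}) := by
          intro a ha
          refine ⟨ha.1, fun hmem => ha.2 ?_⟩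
          rcases hmem with hm | hm
          · left
            rw [Stmt10.lset_epref] at hm ⊢
            obtain ⟨s', hs', he⟩ := hm
            exact ⟨s', by omega, he⟩
          · right
            obtain ⟨s', hs', he⟩ := hm
            exact ⟨s', by omega, he⟩
        have hle : Stmt10.out L D (epref E s) ≤ x := by
          rw [houts s h1 (by omega)]
          exact Nat.sInf_le (hmono hxmem)
        have hne : Stmt10.out L D (epref E s) ≠ x := by
          intro heq
          exact hxmem.2 (Or.inr ⟨s, h2, heq⟩)
        omega
      have hinj : Set.InjOn (fun s => Stmt10.out L D (epref E s)) (Set.Ico (t / D) t) := by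
        intro s hs s' hs' heq
        by_contra hne
        rcases Nat.lt_or_ge s s' with h | h
        · have := (hofact s' hs'.1 (le_of_lt hs'.2)).2
          exact this (Or.inr ⟨s, h, heq⟩)
        · have hss : s' < s := by omega
          have := (hofact s hs.1 (le_of_lt hs.2)).2
          exact this (Or.inr ⟨s', hss, heq.symm⟩)
      set Vset : Set ℕ := O ∩ K ∩ Set.Iio x with hVset
      have hVfin : Vset.Finite := (Set.finite_Iio x).subset fun a ha => ha.2
      have himg : (fun s => Stmt10.out L D (epref E s)) '' Set.Ico (t / D) t ⊆ Vset := by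
        rintro a ⟨s, hs, rfl⟩
        exact ⟨⟨⟨s, rfl⟩, (hofact s hs.1 (le_of_lt hs.2)).1⟩, hlt s hs.1 hs.2⟩
      have hVlb : t - t / D ≤ Vset.ncard := by
        have h1 : ((fun s => Stmt10.out L D (epref E s)) '' Set.Ico (t / D) t).ncard
            = t - t / D := by
          rw [Set.ncard_image_of_injOn hinj, ← Finset.coe_Ico, Set.ncard_coe_finset,
            Nat.card_Ico]
        rw [← h1]
        exact Set.ncard_le_ncard himg hVfin
      set N : ℕ := Nat.count (· ∈ K) x with hN
      have hNncard : N = (K ∩ Set.Iio x).ncard := Stmt10.count_eq_ncard K x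
      have hVN : Vset.ncard ≤ N := by
        rw [hNncard]
        exact Set.ncard_le_ncard (fun a ha => ⟨ha.1.2, ha.2⟩)
          ((Set.finite_Iio x).subset fun a ha => ha.2)
      have hNle : N ≤ (t + 1) + Vset.ncard := by
        rw [hNncard]
        have hsub : K ∩ Set.Iio x ⊆ Stmt10.lset (epref E t) ∪ Vset := by
          rintro k ⟨hk, hkx⟩
          rcases hcov k hk hkx with h | h
          · exact Or.inl h
          · obtain ⟨s', hs', he⟩ := h
            exact Or.inr ⟨⟨⟨s', he⟩, hk⟩, hkx⟩
        have hlfin : (Stmt10.lset (epref E t)).Finite := (epref E t).finite_toSet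
        calc (K ∩ Set.Iio x).ncard ≤ (Stmt10.lset (epref E t) ∪ Vset).ncard :=
              Set.ncard_le_ncard hsub (hlfin.union hVfin)
        _ ≤ (Stmt10.lset (epref E t)).ncard + Vset.ncard := Set.ncard_union_le _ _
        _ ≤ (t + 1) + Vset.ncard := by
              have h1 : (Stmt10.lset (epref E t)).ncard ≤ t + 1 := by
                have h2 : Stmt10.lset (epref E t) = ((epref E t).toFinset : Set ℕ) := by
                  rw [List.coe_toFinset]; rfl
                rw [h2, Set.ncard_coe_finset]
                calc (epref E t).toFinset.card ≤ (epref E t).length :=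
                      List.toFinset_card_le _
                _ = t + 1 := by rw [epref_length]
              omega
      have hNumlb : Vset.ncard ≤ Set.ncard {n : ℕ | n < N ∧ Nat.nth (· ∈ K) n ∈ O ∩ K} := by
        refine Set.ncard_le_ncard_of_injOn (fun k => Nat.count (· ∈ K) k) ?_ ?_ (hnumfin N)
        · rintro k ⟨⟨hkO, hkK⟩, hkx⟩
          refine ⟨Nat.count_strict_mono hkK hkx, ?_⟩
          rw [Nat.nth_count hkK]
          exact ⟨hkO, hkK⟩
        · rintro k ⟨⟨_, hkK⟩, _⟩ k' ⟨⟨_, hkK'⟩, _⟩ heq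
          exact Nat.count_injective hkK hkK' heq
      -- numeric conclusion
      have htD2 : t / D ≤ t / 2 := Nat.div_le_div_left hD2 (by omega)
      have ht2 : t / 2 * 2 ≤ t := Nat.div_mul_le_self t 2
      have hNM : M + 1 ≤ Vset.ncard := by
        have : t - t / 2 ≤ t - t / D := by omega
        omega
      refine ⟨N, by omega, ?_⟩
      -- real arithmetic
      have hN0 : 0 < N := by omega
      have hN0R : (0:ℝ) < (N:ℝ) := by exact_mod_cast hN0
      simp only [hdens]
      rw [le_div_iff₀ hN0R]
      obtain ⟨v, hv⟩ : ∃ v : ℝ, v = (Vset.ncard : ℝ) := ⟨_, rfl⟩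
      have hvnum : v ≤ (Set.ncard {n : ℕ | n < N ∧ Nat.nth (· ∈ K) n ∈ O ∩ K} : ℝ) := by
        rw [hv]
        exact_mod_cast hNumlb
      have hnle : (N:ℝ) ≤ (t:ℝ) + 1 + v := by
        rw [hv]
        have : (N:ℝ) ≤ ((t + 1 + Vset.ncard : ℕ) : ℝ) := by exact_mod_cast hNle
        push_cast at this
        linarith
      have hvlb : (t:ℝ) - (t:ℝ) / (D:ℝ) ≤ v := by
        have h1 : ((t - t / D : ℕ) : ℝ) ≤ v := by rw [hv]; exact_mod_cast hVlb
        have h2 : ((t - t / D : ℕ) : ℝ) = (t:ℝ) - ((t / D : ℕ) : ℝ) := by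
          have : t / D ≤ t := Nat.div_le_self t D
          push_cast [this]
          ring
        have h3 : ((t / D : ℕ) : ℝ) ≤ (t:ℝ) / (D:ℝ) := Nat.cast_div_le
        linarith
      have htTcR : (Tc:ℝ) ≤ (t:ℝ) := by exact_mod_cast htTc
      have e1 : c * ((t:ℝ) + 1) ≤ (1 - c) * ((t:ℝ) - (t:ℝ) / (D:ℝ)) := by
        have heq : (1 - c) * ((t:ℝ) - (t:ℝ) / (D:ℝ)) = ((1 - c) * (1 - 1 / (D:ℝ))) * t := by
          field_simp
        rw [heq]
        have h5 : α * (Tc:ℝ) ≤ α * (t:ℝ) := by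
          apply mul_le_mul_of_nonneg_left htTcR (le_of_lt hαpos)
        have h6 : c ≤ α * t := le_trans hTcα h5
        have h7 : α * (t:ℝ) = ((1 - c) * (1 - 1/(D:ℝ))) * t - c * t := by rw [hα]; ring
        have h8 : c * ((t:ℝ) + 1) = c * (t:ℝ) + c := by ring
        linarith only [h6, h7, h8]
      have e2 : (1 - c) * ((t:ℝ) - (t:ℝ) / (D:ℝ)) ≤ (1 - c) * v :=
        mul_le_mul_of_nonneg_left hvlb (by linarith)
      have e2' : c * ((t:ℝ) + 1) ≤ (1 - c) * v := le_trans e1 e2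
      have e3 : c * ((t:ℝ) + 1 + v) ≤ v := by
        have h7 : c * ((t:ℝ) + 1 + v) = c * ((t:ℝ) + 1) + c * v := by ring
        have h8 : (1 - c) * v = v - c * v := by ring
        linarith only [e2', h7, h8]
      have e4 : c * (N:ℝ) ≤ c * ((t:ℝ) + 1 + v) :=
        mul_le_mul_of_nonneg_left hnle (le_of_lt hc0)
      linarith only [e4, e3, hvnum]
    exact Filter.le_limsup_of_frequently_le hfreq hbdd
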